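/- Let G be a connected graph and e = {u,v} a bridge of G, with G₁ and G₂ the two connected components of G - e. Then T(G) = T(G₁) + T(G₂) - 1. -/

import Mathlib

open SimpleGraph

open SimpleGraph

def IsTreeCover {V : Type} (G : SimpleGraph V) (C : Finset (Set V)) : Prop :=
  (∀ s ∈ C, (G.induce s).IsTree) ∧ (∀ v : V, ∃ s ∈ C, v ∈ s) ∧
    (C : Set (Set V)).PairwiseDisjoint id

noncomputable def treeCoverNumber {V : Type} (G : SimpleGraph V) : ℕ :=
  sInf {n | ∃ C : Finset (Set V), IsTreeCover G C ∧ C.card = n}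

namespace TCAux

variable {V W : Type}

lemma isTree_of_iso {G : SimpleGraph V} {H : SimpleGraph W} (φ : G ≃g H) (h : G.IsTree) :
    H.IsTree := by
  refine ⟨φ.connected_iff.mp h.isConnected, ?_⟩
  intro w c hc
  exact h.IsAcyclic (c.map φ.symm.toHom)
    ((Walk.map_isCycle_iff_of_injective φ.symm.toEquiv.injective).mpr hc)

lemma isTree_singleton (G : SimpleGraph V) (v : V) : (G.induce ({v} : Set V)).IsTree := by
  constructor
  · rw [connected_iff]
    refine ⟨fun a b => ?_, ⟨⟨v, rfl⟩⟩⟩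
    have : a = b := Subtype.ext (by rw [show (a : V) = v from a.2, show (b : V) = v from b.2])
    exact this ▸ Reachable.refl a
  · intro x c hc
    cases c with
    | nil => exact hc.ne_nil rfl
    | @cons _ c _ h q =>
      exact absurd (Subtype.ext (by
        rw [show ((x : {y // y ∈ ({v} : Set V)}) : V) = v from x.2,
          show ((c : {y // y ∈ ({v} : Set V)}) : V) = v from c.2])) h.ne

lemma exists_treeCover [Fintype V] (G : SimpleGraph V) :
    ∃ C : Finset (Set V), IsTreeCover G C := by
  classical
  refine ⟨Finset.univ.image (fun v => ({v} : Set V)), ?_, ?_, ?_⟩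
  · intro s hs
    simp only [Finset.mem_image] at hs
    obtain ⟨w, -, rfl⟩ := hs
    exact isTree_singleton G w
  · intro w; exact ⟨{w}, by simp, rfl⟩
  · intro s hs t ht hst
    simp only [Finset.coe_image, Set.mem_image, Finset.mem_coe] at hs ht
    obtain ⟨a, -, rfl⟩ := hs
    obtain ⟨b, -, rfl⟩ := ht
    simpa [Function.onFun, Set.disjoint_singleton_left] using fun h => hst (by rw [h])

lemma tcn_spec [Fintype V] (G : SimpleGraph V) :
    ∃ C : Finset (Set V), IsTreeCover G C ∧ C.card = treeCoverNumber G := by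
  obtain ⟨C, hC⟩ := exists_treeCover G
  have : treeCoverNumber G ∈ {n | ∃ C : Finset (Set V), IsTreeCover G C ∧ C.card = n} :=
    Nat.sInf_mem ⟨C.card, C, hC, rfl⟩
  exact this

lemma tcn_le {G : SimpleGraph V} {C : Finset (Set V)} (h : IsTreeCover G C) :
    treeCoverNumber G ≤ C.card := Nat.sInf_le ⟨C, h, rfl⟩

lemma one_le_tcn [Fintype V] [Nonempty V] (G : SimpleGraph V) : 1 ≤ treeCoverNumber G := by
  obtain ⟨C, hC, hcard⟩ := tcn_spec G
  obtain ⟨s, hs, -⟩ := hC.2.1 (Classical.arbitrary V)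
  rw [← hcard]
  exact Finset.card_pos.mpr ⟨s, hs⟩

lemma cover_mem_nonempty {G : SimpleGraph V} {C : Finset (Set V)} (h : IsTreeCover G C)
    {s : Set V} (hs : s ∈ C) : s.Nonempty := by
  obtain ⟨x⟩ := (h.1 s hs).isConnected.nonempty
  exact ⟨x.1, x.2⟩

noncomputable def iio (G : SimpleGraph V) (S : Set V) (t : Set S) :
    ((G.induce S).induce t) ≃g (G.induce (Subtype.val '' t)) := by
  refine ⟨Equiv.Set.image Subtype.val t Subtype.val_injective, ?_⟩
  intro a b
  simp [Equiv.Set.image, Equiv.Set.imageOfInjOn]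


/-- Restrict a walk in `G.induce t` whose support lies in `s` to a walk in `G.induce s`. -/
def reWalk {G : SimpleGraph V} {s t : Set V} :
    ∀ {x y : ↥t} (p : (G.induce t).Walk x y) (hs : ∀ z ∈ p.support, (z : V) ∈ s),
      (G.induce s).Walk ⟨x, hs x p.start_mem_support⟩ ⟨y, hs y p.end_mem_support⟩
  | _, _, Walk.nil, _ => Walk.nil
  | _, _, Walk.cons h q, hs =>
      Walk.cons (by exact h)
        (reWalk q (fun z hz => hs z (by rw [Walk.support_cons]; exact List.mem_cons_of_mem _ hz)))

lemma reWalk_map {G : SimpleGraph V} {s t : Set V} {x y : ↥t}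
    (p : (G.induce t).Walk x y) (hs : ∀ z ∈ p.support, (z : V) ∈ s) :
    (reWalk p hs).map (Embedding.induce s (G := G)).toHom
      = p.map (Embedding.induce t (G := G)).toHom := by
  induction p with
  | nil => rfl
  | cons h q ih => simp only [reWalk, Walk.map_cons]; exact congrArg _ (ih _)

lemma reWalk_isCycle {G : SimpleGraph V} {s t : Set V} {x : ↥t}
    {p : (G.induce t).Walk x x} (hc : p.IsCycle) (hs : ∀ z ∈ p.support, (z : V) ∈ s) :
    (reWalk p hs).IsCycle := by
  have h1 : Function.Injective ((Embedding.induce s (G := G)).toHom) :=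
    (Embedding.induce s (G := G)).injective
  have h2 : Function.Injective ((Embedding.induce t (G := G)).toHom) :=
    (Embedding.induce t (G := G)).injective
  have := (Walk.map_isCycle_iff_of_injective h2).mpr hc
  rw [← reWalk_map p hs] at this
  exact (Walk.map_isCycle_iff_of_injective h1).mp this

lemma walk_support_side {K : SimpleGraph W} {s : Set W}
    (h : ∀ a b : W, a ∈ s → K.Adj a b → b ∈ s) :
    ∀ {x y : W} (p : K.Walk x y), x ∈ s → ∀ z ∈ p.support, z ∈ s := by
  intro x y p
  induction p with
  | nil =>
    intro hx z hz
    rw [Walk.support_nil, List.mem_singleton] at hz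
    exact hz ▸ hx
  | cons hadj q ih =>
    intro hx z hz
    rw [Walk.support_cons] at hz
    rcases List.mem_cons.mp hz with rfl | hz
    · exact hx
    · exact ih (h _ _ hx hadj) z hz

lemma reachable_delete_cases {K : SimpleGraph W} {a b : W} (hK : K.Preconnected) (w : W) :
    (K.deleteEdges {s(a, b)}).Reachable a w ∨ (K.deleteEdges {s(a, b)}).Reachable b w := by
  obtain ⟨p⟩ := hK a w
  have step : ∀ {x y : W}, K.Adj x y →
      ((K.deleteEdges {s(a, b)}).Reachable a x ∨ (K.deleteEdges {s(a, b)}).Reachable b x) →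
      ((K.deleteEdges {s(a, b)}).Reachable a y ∨ (K.deleteEdges {s(a, b)}).Reachable b y) := by
    intro x y hxy hx
    by_cases he : s(x, y) = s(a, b)
    · rw [Sym2.eq_iff] at he
      rcases he with ⟨rfl, rfl⟩ | ⟨rfl, rfl⟩
      · exact Or.inr (Reachable.refl _)
      · exact Or.inl (Reachable.refl _)
    · have hadj : (K.deleteEdges {s(a, b)}).Adj x y := by
        rw [deleteEdges_adj]; exact ⟨hxy, by simpa using he⟩
      exact hx.imp (fun r => r.trans hadj.reachable) (fun r => r.trans hadj.reachable)
  have main : ∀ {x y : W} (q : K.Walk x y),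
      ((K.deleteEdges {s(a, b)}).Reachable a x ∨ (K.deleteEdges {s(a, b)}).Reachable b x) →
      ((K.deleteEdges {s(a, b)}).Reachable a y ∨ (K.deleteEdges {s(a, b)}).Reachable b y) := by
    intro x y q
    induction q with
    | nil => exact id
    | cons hadj q ih => exact fun hx => ih (step hadj hx)
  exact main p (Or.inl (Reachable.refl _))


lemma glue {G : SimpleGraph V} {A B : Set V} {u v : V}
    (hu : u ∈ A) (hv : v ∈ B) (huv : G.Adj u v)
    (hd : ∀ x, x ∈ A → x ∈ B → False)
    (hcross : ∀ a b, a ∈ A → b ∈ B → G.Adj a b → a = u ∧ b = v)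
    (hA : (G.induce A).IsTree) (hB : (G.induce B).IsTree) :
    (G.induce (A ∪ B)).IsTree := by
  have hKadj : (G.induce (A ∪ B)).Adj ⟨u, Or.inl hu⟩ ⟨v, Or.inr hv⟩ := huv
  set pu : ↥(A ∪ B) := ⟨u, Or.inl hu⟩ with hpu
  set pv : ↥(A ∪ B) := ⟨v, Or.inr hv⟩ with hpv
  set K' := (G.induce (A ∪ B)).deleteEdges {s(pu, pv)} with hK'
  have keyA : ∀ a b : ↥(A ∪ B), (a : V) ∈ A → K'.Adj a b → (b : V) ∈ A := by
    intro a b ha hab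
    rcases b.2 with hbA | hbB
    · exact hbA
    · exfalso
      obtain ⟨hKab, hne⟩ := deleteEdges_adj.mp hab
      obtain ⟨hau, hbv⟩ := hcross _ _ ha hbB hKab
      exact hne (by simp [Sym2.eq_iff]; left; exact ⟨Subtype.ext hau, Subtype.ext hbv⟩)
  have keyB : ∀ a b : ↥(A ∪ B), (a : V) ∈ B → K'.Adj a b → (b : V) ∈ B := by
    intro a b ha hab
    rcases b.2 with hbA | hbB
    · exfalso
      obtain ⟨hKab, hne⟩ := deleteEdges_adj.mp hab
      obtain ⟨hbu, hav⟩ := hcross _ _ hbA ha hKab.symm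
      exact hne (by simp [Sym2.eq_iff]; right; exact ⟨Subtype.ext hav, Subtype.ext hbu⟩)
    · exact hbB
  constructor
  · exact connected_induce_union hA.isConnected.preconnected hB.isConnected.preconnected hu hv huv
  · intro w c hc
    have hKbr : (G.induce (A ∪ B)).IsBridge s(pu, pv) := by
      rw [isBridge_iff]
      rintro ⟨p⟩
      have : (pv : V) ∈ A :=
        walk_support_side (s := {z : ↥(A ∪ B) | (z : V) ∈ A}) keyA p hu pv p.end_mem_support
      exact hd v this hv
    have hne : s(pu, pv) ∉ c.edges :=
      (isBridge_iff_adj_and_forall_cycle_notMem hKadj).mp hKbr c hc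
    have hce : ∀ e ∈ c.edges, e ∈ K'.edgeSet := by
      intro e he
      rw [hK', edgeSet_deleteEdges]
      refine ⟨c.edges_subset_edgeSet he, ?_⟩
      simp only [Set.mem_singleton_iff]
      rintro rfl
      exact hne he
    rcases w.2 with hw | hw
    · have hsup : ∀ z ∈ (c.transfer K' hce).support, (z : V) ∈ A :=
        walk_support_side (s := {z : ↥(A ∪ B) | (z : V) ∈ A}) keyA _ hw
      rw [Walk.support_transfer] at hsup
      exact hA.IsAcyclic (reWalk c hsup) (reWalk_isCycle hc hsup)
    · have hsup : ∀ z ∈ (c.transfer K' hce).support, (z : V) ∈ B :=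
        walk_support_side (s := {z : ↥(A ∪ B) | (z : V) ∈ B}) keyB _ hw
      rw [Walk.support_transfer] at hsup
      exact hB.IsAcyclic (reWalk c hsup) (reWalk_isCycle hc hsup)

lemma split_left {G : SimpleGraph V} {A B : Set V} {u v : V}
    (hu : u ∈ A) (hv : v ∈ B) (huv : G.Adj u v)
    (hd : ∀ x, x ∈ A → x ∈ B → False)
    (hcross : ∀ a b, a ∈ A → b ∈ B → G.Adj a b → a = u ∧ b = v)
    (hT : (G.induce (A ∪ B)).IsTree) : (G.induce A).IsTree := by
  set pu : ↥(A ∪ B) := ⟨u, Or.inl hu⟩ with hpu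
  set pv : ↥(A ∪ B) := ⟨v, Or.inr hv⟩ with hpv
  set K' := (G.induce (A ∪ B)).deleteEdges {s(pu, pv)} with hK'
  have keyA : ∀ a b : ↥(A ∪ B), (a : V) ∈ A → K'.Adj a b → (b : V) ∈ A := by
    intro a b ha hab
    rcases b.2 with hbA | hbB
    · exact hbA
    · exfalso
      obtain ⟨hKab, hne⟩ := deleteEdges_adj.mp hab
      obtain ⟨hau, hbv⟩ := hcross _ _ ha hbB hKab
      exact hne (by simp [Sym2.eq_iff]; left; exact ⟨Subtype.ext hau, Subtype.ext hbv⟩)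
  have keyB : ∀ a b : ↥(A ∪ B), (a : V) ∈ B → K'.Adj a b → (b : V) ∈ B := by
    intro a b ha hab
    rcases b.2 with hbA | hbB
    · exfalso
      obtain ⟨hKab, hne⟩ := deleteEdges_adj.mp hab
      obtain ⟨hbu, hav⟩ := hcross _ _ hbA ha hKab.symm
      exact hne (by simp [Sym2.eq_iff]; right; exact ⟨Subtype.ext hav, Subtype.ext hbu⟩)
    · exact hbB
  constructor
  · rw [connected_iff_exists_forall_reachable]
    refine ⟨⟨u, hu⟩, ?_⟩
    rintro ⟨x, hx⟩
    rcases reachable_delete_cases (a := pu) (b := pv) hT.isConnected.preconnected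
        ⟨x, Or.inl hx⟩ with hr | hr
    · obtain ⟨p⟩ := hr
      have hce : ∀ e ∈ p.edges, e ∈ (G.induce (A ∪ B)).edgeSet := by
        intro e he
        have := p.edges_subset_edgeSet he
        rw [edgeSet_deleteEdges] at this
        exact this.1
      have hsup : ∀ z ∈ (p.transfer (G.induce (A ∪ B)) hce).support, (z : V) ∈ A := by
        rw [Walk.support_transfer]
        exact walk_support_side (s := {z : ↥(A ∪ B) | (z : V) ∈ A}) keyA p hu
      exact ⟨reWalk (p.transfer (G.induce (A ∪ B)) hce) hsup⟩
    · exfalso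
      obtain ⟨q⟩ := hr
      exact hd x hx
        (walk_support_side (s := {z : ↥(A ∪ B) | (z : V) ∈ B}) keyB q hv _ q.end_mem_support)
  · intro w c hc
    have hle : A ⊆ A ∪ B := Set.subset_union_left
    have hinj : Function.Injective ((G.induceHomOfLE hle).toHom) :=
      (G.induceHomOfLE hle).injective
    exact hT.IsAcyclic _ ((Walk.map_isCycle_iff_of_injective hinj).mpr hc)

end TCAux

open TCAux in
theorem stmt_8 {V : Type} [Fintype V] (G : SimpleGraph V) (hG : G.Connected) (u v : V)
    (hb : G.IsBridge s(u, v)) :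
    treeCoverNumber G =
      treeCoverNumber ((G.deleteEdges {s(u, v)}).induce
          ((G.deleteEdges {s(u, v)}).connectedComponentMk u).supp) +
        treeCoverNumber ((G.deleteEdges {s(u, v)}).induce
          ((G.deleteEdges {s(u, v)}).connectedComponentMk v).supp) - 1 := by
  classical
  have hnr := isBridge_iff.mp hb
  have hadj : G.Adj u v := hb.reachable_iff_adj.mp (hG.preconnected u v)
  set G' : SimpleGraph V := G.deleteEdges {s(u, v)} with hG'
  set Su : Set V := (G'.connectedComponentMk u).supp with hSu
  set Sv : Set V := (G'.connectedComponentMk v).supp with hSv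
  have hnr' : ¬ G'.Reachable u v := hnr
  have memSu : ∀ x, x ∈ Su ↔ G'.Reachable u x := by
    intro x
    rw [hSu, ConnectedComponent.mem_supp_iff, ConnectedComponent.eq]
    exact ⟨Reachable.symm, Reachable.symm⟩
  have memSv : ∀ x, x ∈ Sv ↔ G'.Reachable v x := by
    intro x
    rw [hSv, ConnectedComponent.mem_supp_iff, ConnectedComponent.eq]
    exact ⟨Reachable.symm, Reachable.symm⟩
  have huSu : u ∈ Su := (memSu u).mpr (Reachable.refl u)
  have hvSv : v ∈ Sv := (memSv v).mpr (Reachable.refl v)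
  have hd : ∀ x, x ∈ Su → x ∈ Sv → False := fun x hx hy =>
    hnr' (((memSu x).mp hx).trans ((memSv x).mp hy).symm)
  have hcov : ∀ x, x ∈ Su ∨ x ∈ Sv := by
    intro x
    rcases reachable_delete_cases (a := u) (b := v) hG.preconnected x with h | h
    · exact Or.inl ((memSu x).mpr h)
    · exact Or.inr ((memSv x).mpr h)
  have hcross : ∀ a b, a ∈ Su → b ∈ Sv → G.Adj a b → a = u ∧ b = v := by
    intro a b ha hb hab
    by_cases he : s(a, b) = s(u, v)
    · rw [Sym2.eq_iff] at he
      rcases he with ⟨rfl, rfl⟩ | ⟨rfl, rfl⟩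
      · exact ⟨rfl, rfl⟩
      · exact (hd a ha hvSv).elim
    · have hadj' : G'.Adj a b := by
        rw [hG', deleteEdges_adj]
        exact ⟨hab, by simpa using he⟩
      exact (hd b ((memSu b).mpr (((memSu a).mp ha).trans hadj'.reachable)) hb).elim
  have hagree1 : G'.induce Su = G.induce Su := by
    ext a b
    constructor
    · intro h
      exact (deleteEdges_adj.mp h).1
    · intro h
      rw [hG']
      refine deleteEdges_adj.mpr ⟨h, ?_⟩
      simp only [Set.mem_singleton_iff, Sym2.eq_iff]
      rintro (⟨ha', hb'⟩ | ⟨ha', hb'⟩)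
      · exact hd v (hb' ▸ b.2) hvSv
      · exact hd v (ha' ▸ a.2) hvSv
  have hagree2 : G'.induce Sv = G.induce Sv := by
    ext a b
    constructor
    · intro h
      exact (deleteEdges_adj.mp h).1
    · intro h
      rw [hG']
      refine deleteEdges_adj.mpr ⟨h, ?_⟩
      simp only [Set.mem_singleton_iff, Sym2.eq_iff]
      rintro (⟨ha', hb'⟩ | ⟨ha', hb'⟩)
      · exact hd u huSu (ha' ▸ a.2)
      · exact hd u huSu (hb' ▸ b.2)
  rw [hagree1, hagree2]
  haveI : Fintype ↥Su := Fintype.ofFinite _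
  haveI : Fintype ↥Sv := Fintype.ofFinite _
  haveI : Nonempty ↥Su := ⟨⟨u, huSu⟩⟩
  haveI : Nonempty ↥Sv := ⟨⟨v, hvSv⟩⟩
  set T1 := treeCoverNumber (G.induce Su) with hT1def
  set T2 := treeCoverNumber (G.induce Sv) with hT2def
  have hT1 : 1 ≤ T1 := one_le_tcn (G.induce Su)
  have hT2 : 1 ≤ T2 := one_le_tcn (G.induce Sv)
  have hub : treeCoverNumber G + 1 ≤ T1 + T2 := by
    obtain ⟨C1, hC1, hc1⟩ := tcn_spec (G.induce Su)
    obtain ⟨C2, hC2, hc2⟩ := tcn_spec (G.induce Sv)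
    obtain ⟨t1, ht1, hut1⟩ := hC1.2.1 ⟨u, huSu⟩
    obtain ⟨t2, ht2, hvt2⟩ := hC2.2.1 ⟨v, hvSv⟩
    set F1 : Set ↥Su → Set V := fun t => Subtype.val '' t with hF1
    set F2 : Set ↥Sv → Set V := fun t => Subtype.val '' t with hF2
    have hF1sub : ∀ t, F1 t ⊆ Su := by rintro t x ⟨z, -, rfl⟩; exact z.2
    have hF2sub : ∀ t, F2 t ⊆ Sv := by rintro t x ⟨z, -, rfl⟩; exact z.2
    have hF1inj : Function.Injective F1 := Set.image_injective.mpr Subtype.val_injective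
    have hF2inj : Function.Injective F2 := Set.image_injective.mpr Subtype.val_injective
    have htree1 : ∀ t ∈ C1, (G.induce (F1 t)).IsTree := fun t ht =>
      isTree_of_iso (iio G Su t) (hC1.1 t ht)
    have htree2 : ∀ t ∈ C2, (G.induce (F2 t)).IsTree := fun t ht =>
      isTree_of_iso (iio G Sv t) (hC2.1 t ht)
    have hd12 : ∀ t t', Disjoint (F1 t) (F2 t') := fun t t' =>
      Set.disjoint_left.mpr fun x hx hy => hd x (hF1sub t hx) (hF2sub t' hy)
    have hdis1 : ∀ t ∈ C1, ∀ t' ∈ C1, t ≠ t' → Disjoint (F1 t) (F1 t') := by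
      intro t ht t' ht' hne
      exact Set.disjoint_image_of_injective Subtype.val_injective
        (hC1.2.2 (Finset.mem_coe.mpr ht) (Finset.mem_coe.mpr ht') hne)
    have hdis2 : ∀ t ∈ C2, ∀ t' ∈ C2, t ≠ t' → Disjoint (F2 t) (F2 t') := by
      intro t ht t' ht' hne
      exact Set.disjoint_image_of_injective Subtype.val_injective
        (hC2.2.2 (Finset.mem_coe.mpr ht) (Finset.mem_coe.mpr ht') hne)
    set A : Set V := F1 t1 ∪ F2 t2 with hA
    have huA : u ∈ F1 t1 := ⟨⟨u, huSu⟩, hut1, rfl⟩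
    have hvA : v ∈ F2 t2 := ⟨⟨v, hvSv⟩, hvt2, rfl⟩
    have htreeA : (G.induce A).IsTree :=
      glue huA hvA hadj (fun x hx hy => hd x (hF1sub t1 hx) (hF2sub t2 hy))
        (fun a b ha hb h => hcross a b (hF1sub t1 ha) (hF2sub t2 hb) h)
        (htree1 t1 ht1) (htree2 t2 ht2)
    set D : Finset (Set V) := ((C1.erase t1).image F1 ∪ (C2.erase t2).image F2) ∪ {A} with hD
    have hmemD : ∀ s, s ∈ D ↔
        ((∃ t ∈ C1.erase t1, F1 t = s) ∨ (∃ t ∈ C2.erase t2, F2 t = s)) ∨ s = A := by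
      intro s
      simp only [hD, Finset.mem_union, Finset.mem_image, Finset.mem_erase,
        Finset.mem_singleton]
      try tauto
    have dA1 : ∀ t ∈ C1.erase t1, Disjoint (F1 t) A := by
      intro t ht
      rw [hA, Set.disjoint_union_right]
      exact ⟨hdis1 t (Finset.mem_of_mem_erase ht) t1 ht1 (Finset.ne_of_mem_erase ht),
        hd12 t t2⟩
    have dA2 : ∀ t ∈ C2.erase t2, Disjoint (F2 t) A := by
      intro t ht
      rw [hA, Set.disjoint_union_right]
      exact ⟨(hd12 t1 t).symm,
        hdis2 t (Finset.mem_of_mem_erase ht) t2 ht2 (Finset.ne_of_mem_erase ht)⟩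
    have hDcover : IsTreeCover G D := by
      refine ⟨?_, ?_, ?_⟩
      · intro s hs
        rcases (hmemD s).mp hs with (⟨t, ht, rfl⟩ | ⟨t, ht, rfl⟩) | rfl
        · exact htree1 t (Finset.mem_of_mem_erase ht)
        · exact htree2 t (Finset.mem_of_mem_erase ht)
        · exact htreeA
      · intro x
        rcases hcov x with hx | hx
        · obtain ⟨t, ht, hxt⟩ := hC1.2.1 ⟨x, hx⟩
          by_cases hne : t = t1
          · subst hne
            exact ⟨A, (hmemD A).mpr (Or.inr rfl), Or.inl ⟨⟨x, hx⟩, hxt, rfl⟩⟩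
          · exact ⟨F1 t, (hmemD _).mpr (Or.inl (Or.inl ⟨t, Finset.mem_erase.mpr ⟨hne, ht⟩, rfl⟩)),
              ⟨⟨x, hx⟩, hxt, rfl⟩⟩
        · obtain ⟨t, ht, hxt⟩ := hC2.2.1 ⟨x, hx⟩
          by_cases hne : t = t2
          · subst hne
            exact ⟨A, (hmemD A).mpr (Or.inr rfl), Or.inr ⟨⟨x, hx⟩, hxt, rfl⟩⟩
          · exact ⟨F2 t, (hmemD _).mpr (Or.inl (Or.inr ⟨t, Finset.mem_erase.mpr ⟨hne, ht⟩, rfl⟩)),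
              ⟨⟨x, hx⟩, hxt, rfl⟩⟩
      · intro s hs s' hs' hne
        simp only [Function.onFun, id_eq]
        rw [Finset.mem_coe] at hs hs'
        rcases (hmemD s).mp hs with (⟨t, ht, rfl⟩ | ⟨t, ht, rfl⟩) | rfl <;>
          rcases (hmemD s').mp hs' with (⟨t', ht', rfl⟩ | ⟨t', ht', rfl⟩) | rfl
        · exact hdis1 t (Finset.mem_of_mem_erase ht) t' (Finset.mem_of_mem_erase ht')
            (fun h => hne (congrArg F1 h))
        · exact hd12 t t'
        · exact dA1 t ht
        · exact (hd12 t' t).symm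
        · exact hdis2 t (Finset.mem_of_mem_erase ht) t' (Finset.mem_of_mem_erase ht')
            (fun h => hne (congrArg F2 h))
        · exact dA2 t ht
        · exact (dA1 t' ht').symm
        · exact (dA2 t' ht').symm
        · exact absurd rfl hne
    have hDnonmem : A ∉ (C1.erase t1).image F1 ∪ (C2.erase t2).image F2 := by
      intro hmem
      rw [Finset.mem_union] at hmem
      rcases hmem with h | h
      · obtain ⟨t, ht, hEq⟩ := Finset.mem_image.mp h
        have hvmem : v ∈ F1 t := by rw [hEq, hA]; exact Set.mem_union_right _ hvA
        exact hd v (hF1sub t hvmem) hvSv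
      · obtain ⟨t, ht, hEq⟩ := Finset.mem_image.mp h
        have humem : u ∈ F2 t := by rw [hEq, hA]; exact Set.mem_union_left _ huA
        exact hd u huSu (hF2sub t humem)
    have hd3 : Disjoint ((C1.erase t1).image F1) ((C2.erase t2).image F2) := by
      rw [Finset.disjoint_left]
      rintro s hs hs'
      obtain ⟨t, ht, rfl⟩ := Finset.mem_image.mp hs
      obtain ⟨t', ht', hEq⟩ := Finset.mem_image.mp hs'
      obtain ⟨x, hx⟩ := cover_mem_nonempty hC1 (Finset.mem_of_mem_erase ht)
      have hx1 : (x : V) ∈ F1 t := ⟨x, hx, rfl⟩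
      have hx2 : (x : V) ∈ F2 t' := by rw [hEq]; exact hx1
      exact hd _ (hF1sub t hx1) (hF2sub t' hx2)
    have hcardD : D.card = (T1 - 1) + (T2 - 1) + 1 := by
      rw [hD, Finset.card_union_of_disjoint (Finset.disjoint_singleton_right.mpr hDnonmem),
        Finset.card_union_of_disjoint hd3,
        Finset.card_image_of_injective _ hF1inj, Finset.card_image_of_injective _ hF2inj,
        Finset.card_erase_of_mem ht1, Finset.card_erase_of_mem ht2, hc1, hc2,
        Finset.card_singleton]
    have hle := tcn_le hDcover
    omega
  have hlb : T1 + T2 ≤ treeCoverNumber G + 1 := by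
    obtain ⟨C, hC, hcC⟩ := tcn_spec G
    have trich : ∀ s ∈ C, s ⊆ Su ∨ s ⊆ Sv ∨ (u ∈ s ∧ v ∈ s) := by
      intro s hs
      by_cases h1 : s ⊆ Su
      · exact Or.inl h1
      by_cases h2 : s ⊆ Sv
      · exact Or.inr (Or.inl h2)
      refine Or.inr (Or.inr ?_)
      obtain ⟨b, hbs, hbn⟩ := Set.not_subset.mp h1
      obtain ⟨a, has, han⟩ := Set.not_subset.mp h2
      have hbSv : b ∈ Sv := (hcov b).resolve_left hbn
      have haSu : a ∈ Su := (hcov a).resolve_right han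
      obtain ⟨p⟩ := (hC.1 s hs).isConnected.preconnected ⟨a, has⟩ ⟨b, hbs⟩
      have main : ∀ {x y : ↥s} (q : (G.induce s).Walk x y),
          (x : V) ∈ Su → (y : V) ∈ Sv → u ∈ s ∧ v ∈ s := by
        intro x y q
        induction q with
        | nil => exact fun hx hy => (hd _ hx hy).elim
        | @cons x' c' y' hq q ih =>
          intro hx hy
          rcases hcov (c' : V) with hc | hc
          · exact ih hc hy
          · obtain ⟨h1', h2'⟩ := hcross _ _ hx hc hq
            exact ⟨h1' ▸ x'.2, h2' ▸ c'.2⟩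
      exact main p haSu hbSv
    set Cu := C.filter (fun s => s ⊆ Su) with hCudef
    set Cv := C.filter (fun s => s ⊆ Sv) with hCvdef
    set Cs := C \ (Cu ∪ Cv) with hCsdef
    have hCuSub : ∀ s ∈ Cu, s ∈ C ∧ s ⊆ Su := by
      intro s hs
      rw [hCudef, Finset.mem_filter] at hs
      exact hs
    have hCvSub : ∀ s ∈ Cv, s ∈ C ∧ s ⊆ Sv := by
      intro s hs
      rw [hCvdef, Finset.mem_filter] at hs
      exact hs
    have hnotCu : ∀ s, v ∈ s → s ∉ Cu := fun s hv' hs => hd v ((hCuSub s hs).2 hv') hvSv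
    have hnotCv : ∀ s, u ∈ s → s ∉ Cv := fun s hu' hs => hd u huSu ((hCvSub s hs).2 hu')
    have hCsSpan : ∀ s ∈ Cs, s ∈ C ∧ u ∈ s ∧ v ∈ s := by
      intro s hs
      rw [hCsdef, Finset.mem_sdiff, Finset.mem_union] at hs
      obtain ⟨hsC, hn⟩ := hs
      rcases trich s hsC with h | h | h
      · exact absurd (Or.inl (by rw [hCudef]; exact Finset.mem_filter.mpr ⟨hsC, h⟩)) hn
      · exact absurd (Or.inr (by rw [hCvdef]; exact Finset.mem_filter.mpr ⟨hsC, h⟩)) hn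
      · exact ⟨hsC, h⟩
    have hmemCs : ∀ s ∈ C, u ∈ s → v ∈ s → s ∈ Cs := by
      intro s hsC hu' hv'
      rw [hCsdef, Finset.mem_sdiff, Finset.mem_union]
      exact ⟨hsC, fun h => h.elim (hnotCu s hv') (hnotCv s hu')⟩
    have hCs_card : Cs.card ≤ 1 := by
      rw [Finset.card_le_one]
      intro s hs s' hs'
      by_contra hne
      exact Set.disjoint_left.mp
        (hC.2.2 (Finset.mem_coe.mpr (hCsSpan s hs).1) (Finset.mem_coe.mpr (hCsSpan s' hs').1) hne)
        (hCsSpan s hs).2.1 (hCsSpan s' hs').2.1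
    have hsum : Cu.card + Cv.card + Cs.card = treeCoverNumber G := by
      have hsub : Cu ∪ Cv ⊆ C := by
        rw [hCudef, hCvdef]
        exact Finset.union_subset (Finset.filter_subset _ _) (Finset.filter_subset _ _)
      have hdisj' : Disjoint Cu Cv := by
        rw [Finset.disjoint_left]
        intro s hsu hsv
        obtain ⟨x, hx⟩ := cover_mem_nonempty hC (hCuSub s hsu).1
        exact hd x ((hCuSub s hsu).2 hx) ((hCvSub s hsv).2 hx)
      calc Cu.card + Cv.card + Cs.card
          = (Cu ∪ Cv).card + Cs.card := by rw [Finset.card_union_of_disjoint hdisj']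
        _ = ((Cu ∪ Cv) ∪ Cs).card := by
            rw [Finset.card_union_of_disjoint (Finset.disjoint_sdiff)]
        _ = C.card := by rw [hCsdef, Finset.union_sdiff_of_subset hsub]
        _ = treeCoverNumber G := hcC
    have himg1 : ∀ {s : Set V}, s ⊆ Su → Subtype.val '' (Subtype.val ⁻¹' s : Set ↥Su) = s := by
      intro s hsub
      rw [Set.image_preimage_eq_inter_range, Subtype.range_coe]
      exact Set.inter_eq_self_of_subset_left hsub
    have himg2 : ∀ {s : Set V}, s ⊆ Sv → Subtype.val '' (Subtype.val ⁻¹' s : Set ↥Sv) = s := by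
      intro s hsub
      rw [Set.image_preimage_eq_inter_range, Subtype.range_coe]
      exact Set.inter_eq_self_of_subset_left hsub
    have htreeP1 : ∀ {s : Set V}, s ⊆ Su → (G.induce s).IsTree →
        ((G.induce Su).induce (Subtype.val ⁻¹' s)).IsTree := by
      intro s hsub ht
      refine isTree_of_iso (iio G Su (Subtype.val ⁻¹' s)).symm ?_
      rw [himg1 hsub]
      exact ht
    have htreeP2 : ∀ {s : Set V}, s ⊆ Sv → (G.induce s).IsTree →
        ((G.induce Sv).induce (Subtype.val ⁻¹' s)).IsTree := by
      intro s hsub ht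
      refine isTree_of_iso (iio G Sv (Subtype.val ⁻¹' s)).symm ?_
      rw [himg2 hsub]
      exact ht
    have hpre1 : ∀ {s s' : Set V}, Disjoint s s' →
        Disjoint (Subtype.val ⁻¹' s : Set ↥Su) (Subtype.val ⁻¹' s') :=
      fun h => Disjoint.preimage _ h
    have hpre2 : ∀ {s s' : Set V}, Disjoint s s' →
        Disjoint (Subtype.val ⁻¹' s : Set ↥Sv) (Subtype.val ⁻¹' s') :=
      fun h => Disjoint.preimage _ h
    by_cases hCsE : Cs = ∅
    · have hInCu : ∀ {s : Set V}, s ∈ C → ∀ {x : V}, x ∈ s → x ∈ Su → s ∈ Cu := by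
        intro s hsC x hxs hxSu
        rcases trich s hsC with h | h | h
        · rw [hCudef]; exact Finset.mem_filter.mpr ⟨hsC, h⟩
        · exact (hd x hxSu (h hxs)).elim
        · exact absurd (hCsE ▸ hmemCs s hsC h.1 h.2) (Finset.notMem_empty s)
      have hInCv : ∀ {s : Set V}, s ∈ C → ∀ {x : V}, x ∈ s → x ∈ Sv → s ∈ Cv := by
        intro s hsC x hxs hxSv
        rcases trich s hsC with h | h | h
        · exact (hd x (h hxs) hxSv).elim
        · rw [hCvdef]; exact Finset.mem_filter.mpr ⟨hsC, h⟩
        · exact absurd (hCsE ▸ hmemCs s hsC h.1 h.2) (Finset.notMem_empty s)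
      have hDcov1 : IsTreeCover (G.induce Su)
          (Cu.image (fun s => (Subtype.val ⁻¹' s : Set ↥Su))) := by
        refine ⟨?_, ?_, ?_⟩
        · intro t ht
          obtain ⟨s, hsCu, rfl⟩ := Finset.mem_image.mp ht
          exact htreeP1 (hCuSub s hsCu).2 (hC.1 s (hCuSub s hsCu).1)
        · rintro ⟨x, hx⟩
          obtain ⟨s, hsC, hxs⟩ := hC.2.1 x
          exact ⟨_, Finset.mem_image_of_mem _ (hInCu hsC hxs hx), hxs⟩
        · intro t ht t' ht' hne
          simp only [Function.onFun, id_eq]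
          rw [Finset.coe_image] at ht ht'
          obtain ⟨s, hs, rfl⟩ := ht
          obtain ⟨s', hs', rfl⟩ := ht'
          refine hpre1 (hC.2.2 (Finset.mem_coe.mpr (hCuSub s hs).1)
            (Finset.mem_coe.mpr (hCuSub s' hs').1) ?_)
          intro h
          exact hne (by rw [h])
      have hDcov2 : IsTreeCover (G.induce Sv)
          (Cv.image (fun s => (Subtype.val ⁻¹' s : Set ↥Sv))) := by
        refine ⟨?_, ?_, ?_⟩
        · intro t ht
          obtain ⟨s, hsCv, rfl⟩ := Finset.mem_image.mp ht
          exact htreeP2 (hCvSub s hsCv).2 (hC.1 s (hCvSub s hsCv).1)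
        · rintro ⟨x, hx⟩
          obtain ⟨s, hsC, hxs⟩ := hC.2.1 x
          exact ⟨_, Finset.mem_image_of_mem _ (hInCv hsC hxs hx), hxs⟩
        · intro t ht t' ht' hne
          simp only [Function.onFun, id_eq]
          rw [Finset.coe_image] at ht ht'
          obtain ⟨s, hs, rfl⟩ := ht
          obtain ⟨s', hs', rfl⟩ := ht'
          refine hpre2 (hC.2.2 (Finset.mem_coe.mpr (hCvSub s hs).1)
            (Finset.mem_coe.mpr (hCvSub s' hs').1) ?_)
          intro h
          exact hne (by rw [h])
      have hT1le : T1 ≤ Cu.card :=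
        le_trans (tcn_le hDcov1) Finset.card_image_le
      have hT2le : T2 ≤ Cv.card :=
        le_trans (tcn_le hDcov2) Finset.card_image_le
      omega
    · obtain ⟨s0, hs0⟩ := Finset.nonempty_iff_ne_empty.mpr hCsE
      obtain ⟨hs0C, hus0, hvs0⟩ := hCsSpan s0 hs0
      have hCs1 : 1 ≤ Cs.card := Finset.card_pos.mpr ⟨s0, hs0⟩
      have huniq : ∀ t ∈ Cs, t = s0 := fun t ht => Finset.card_le_one.mp hCs_card t ht s0 hs0
      set A := s0 ∩ Su with hA
      set B := s0 ∩ Sv with hB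
      have hABs : A ∪ B = s0 := by
        ext x
        constructor
        · rintro (⟨h, -⟩ | ⟨h, -⟩) <;> exact h
        · intro h
          rcases hcov x with hx | hx
          · exact Or.inl ⟨h, hx⟩
          · exact Or.inr ⟨h, hx⟩
      have hdAB : ∀ x, x ∈ A → x ∈ B → False := fun x hx hy => hd x hx.2 hy.2
      have hcrossAB : ∀ a b, a ∈ A → b ∈ B → G.Adj a b → a = u ∧ b = v :=
        fun a b ha hb h => hcross a b ha.2 hb.2 h
      have htreeAB : (G.induce (A ∪ B)).IsTree := by rw [hABs]; exact hC.1 s0 hs0C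
      have htreeA : (G.induce A).IsTree :=
        split_left (A := A) (B := B) (Set.mem_inter hus0 huSu) (Set.mem_inter hvs0 hvSv)
          hadj hdAB hcrossAB htreeAB
      have htreeB : (G.induce B).IsTree := by
        refine split_left (u := v) (v := u) (A := B) (B := A) (Set.mem_inter hvs0 hvSv)
          (Set.mem_inter hus0 huSu) hadj.symm (fun x hx hy => hdAB x hy hx)
          (fun a b ha hb h => ⟨(hcrossAB b a hb ha h.symm).2, (hcrossAB b a hb ha h.symm).1⟩) ?_
        rw [Set.union_comm, hABs]
        exact hC.1 s0 hs0C
      have hAsub : A ⊆ Su := Set.inter_subset_right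
      have hBsub : B ⊆ Sv := Set.inter_subset_right
      have hs0notCu : s0 ∉ Cu := hnotCu s0 hvs0
      have hs0notCv : s0 ∉ Cv := hnotCv s0 hus0
      have hDcov1 : IsTreeCover (G.induce Su)
          ((Cu.image (fun s => (Subtype.val ⁻¹' s : Set ↥Su))) ∪ {(Subtype.val ⁻¹' A : Set ↥Su)}) := by
        refine ⟨?_, ?_, ?_⟩
        · intro t ht
          rw [Finset.mem_union, Finset.mem_singleton] at ht
          rcases ht with ht | rfl
          · obtain ⟨s, hsCu, rfl⟩ := Finset.mem_image.mp ht
            exact htreeP1 (hCuSub s hsCu).2 (hC.1 s (hCuSub s hsCu).1)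
          · exact htreeP1 hAsub htreeA
        · rintro ⟨x, hx⟩
          obtain ⟨s, hsC, hxs⟩ := hC.2.1 x
          rcases trich s hsC with h | h | h
          · refine ⟨_, Finset.mem_union_left _ (Finset.mem_image_of_mem _ ?_), hxs⟩
            rw [hCudef]
            exact Finset.mem_filter.mpr ⟨hsC, h⟩
          · exact (hd x hx (h hxs)).elim
          · have hseq : s = s0 := huniq s (hmemCs s hsC h.1 h.2)
            refine ⟨_, Finset.mem_union_right _ (Finset.mem_singleton_self _), ?_⟩
            exact Set.mem_preimage.mpr ⟨hseq ▸ hxs, hx⟩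
        · intro t ht t' ht' hne
          simp only [Function.onFun, id_eq]
          rw [Finset.coe_union, Finset.coe_image, Finset.coe_singleton] at ht ht'
          have hdisj_sA : ∀ s ∈ Cu, Disjoint (Subtype.val ⁻¹' s : Set ↥Su) (Subtype.val ⁻¹' A) := by
            intro s hsCu
            refine hpre1 (Disjoint.mono_right (Set.inter_subset_left) ?_)
            refine hC.2.2 (Finset.mem_coe.mpr (hCuSub s hsCu).1) (Finset.mem_coe.mpr hs0C) ?_
            intro h
            exact hs0notCu (h ▸ hsCu)
          rcases ht with ⟨s, hs, rfl⟩ | rfl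
          · rcases ht' with ⟨s', hs', rfl⟩ | rfl
            · refine hpre1 (hC.2.2 (Finset.mem_coe.mpr (hCuSub s hs).1)
                (Finset.mem_coe.mpr (hCuSub s' hs').1) ?_)
              intro h
              exact hne (by rw [h])
            · exact hdisj_sA s hs
          · rcases ht' with ⟨s', hs', rfl⟩ | rfl
            · exact (hdisj_sA s' hs').symm
            · exact absurd rfl hne
      have hDcov2 : IsTreeCover (G.induce Sv)
          ((Cv.image (fun s => (Subtype.val ⁻¹' s : Set ↥Sv))) ∪ {(Subtype.val ⁻¹' B : Set ↥Sv)}) := by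
        refine ⟨?_, ?_, ?_⟩
        · intro t ht
          rw [Finset.mem_union, Finset.mem_singleton] at ht
          rcases ht with ht | rfl
          · obtain ⟨s, hsCv, rfl⟩ := Finset.mem_image.mp ht
            exact htreeP2 (hCvSub s hsCv).2 (hC.1 s (hCvSub s hsCv).1)
          · exact htreeP2 hBsub htreeB
        · rintro ⟨x, hx⟩
          obtain ⟨s, hsC, hxs⟩ := hC.2.1 x
          rcases trich s hsC with h | h | h
          · exact (hd x (h hxs) hx).elim
          · refine ⟨_, Finset.mem_union_left _ (Finset.mem_image_of_mem _ ?_), hxs⟩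
            rw [hCvdef]
            exact Finset.mem_filter.mpr ⟨hsC, h⟩
          · have hseq : s = s0 := huniq s (hmemCs s hsC h.1 h.2)
            refine ⟨_, Finset.mem_union_right _ (Finset.mem_singleton_self _), ?_⟩
            exact Set.mem_preimage.mpr ⟨hseq ▸ hxs, hx⟩
        · intro t ht t' ht' hne
          simp only [Function.onFun, id_eq]
          rw [Finset.coe_union, Finset.coe_image, Finset.coe_singleton] at ht ht'
          have hdisj_sB : ∀ s ∈ Cv, Disjoint (Subtype.val ⁻¹' s : Set ↥Sv) (Subtype.val ⁻¹' B) := by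
            intro s hsCv
            refine hpre2 (Disjoint.mono_right (Set.inter_subset_left) ?_)
            refine hC.2.2 (Finset.mem_coe.mpr (hCvSub s hsCv).1) (Finset.mem_coe.mpr hs0C) ?_
            intro h
            exact hs0notCv (h ▸ hsCv)
          rcases ht with ⟨s, hs, rfl⟩ | rfl
          · rcases ht' with ⟨s', hs', rfl⟩ | rfl
            · refine hpre2 (hC.2.2 (Finset.mem_coe.mpr (hCvSub s hs).1)
                (Finset.mem_coe.mpr (hCvSub s' hs').1) ?_)
              intro h
              exact hne (by rw [h])
            · exact hdisj_sB s hs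
          · rcases ht' with ⟨s', hs', rfl⟩ | rfl
            · exact (hdisj_sB s' hs').symm
            · exact absurd rfl hne
      have hT1le : T1 ≤ Cu.card + 1 := by
        refine le_trans (tcn_le hDcov1) (le_trans (Finset.card_union_le _ _) ?_)
        simpa using Finset.card_image_le
      have hT2le : T2 ≤ Cv.card + 1 := by
        refine le_trans (tcn_le hDcov2) (le_trans (Finset.card_union_le _ _) ?_)
        simpa using Finset.card_image_le
      omega
  omega
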